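/- For a complex parameter a with Re(a) > 0 and Re(a^2) > 0, the function ψ_a(t) = (a/(2√π t^{3/2})) · exp(-a²/(4t)) on (0,∞) has Laplace transform L(ψ_a)(z) = exp(-a√z) for every complex z with Re(z) > 0, where √z denotes the principal branch of the square root. -/

import Mathlib

open MeasureTheory Real Complex Set Metric Filter

lemma exp_neg_le (y : ℝ) (hy : 0 < y) : Real.exp (-y) ≤ 27 / y^3 := by
  have h1 : (y/3)^3 ≤ (Real.exp (y/3))^3 :=
    pow_le_pow_left₀ (by positivity) (by linarith [Real.add_one_le_exp (y/3)]) 3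
  have h2 : (Real.exp (y/3))^3 = Real.exp y := by
    rw [← Real.exp_nat_mul]; push_cast; ring_nf
  have h3 : y^3/27 ≤ Real.exp y := by
    rw [← h2]; calc y^3/27 = (y/3)^3 := by ring
      _ ≤ _ := h1
  rw [Real.exp_neg]
  rw [div_eq_mul_inv, show (27:ℝ) * (y^3)⁻¹ = (y^3/27)⁻¹ by field_simp]
  exact inv_anti₀ (by positivity) h3

lemma rpow_exp_bound {k ε t : ℝ} (hk0 : 0 ≤ k) (hk3 : k ≤ 3) (hε : 0 < ε) (ht : 0 < t) :
    t ^ (-k) * Real.exp (-(ε/(4*t))) ≤ max 1 (1728/ε^3) := by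
  rcases le_or_gt 1 t with h1 | h1
  · have h2 : t ^ (-k) ≤ 1 := Real.rpow_le_one_of_one_le_of_nonpos h1 (by linarith)
    have h3 : Real.exp (-(ε/(4*t))) ≤ 1 := by
      rw [Real.exp_le_one_iff]; rw [neg_nonpos]; positivity
    calc t ^ (-k) * Real.exp (-(ε/(4*t))) ≤ 1 * 1 := by
          apply mul_le_mul h2 h3 (by positivity) zero_le_one
      _ = 1 := by ring
      _ ≤ _ := le_max_left _ _
  · have hx : 0 < ε/(4*t) := by positivity
    have h2 : Real.exp (-(ε/(4*t))) ≤ 27/(ε/(4*t))^3 := exp_neg_le _ hx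
    have h3 : 27/(ε/(4*t))^3 = 1728/ε^3 * t^(3:ℕ) := by
      field_simp; ring
    have h4 : t ^ (-k) * (1728/ε^3 * t^(3:ℕ)) = 1728/ε^3 * t^(3-k) := by
      rw [← Real.rpow_natCast t 3, show (3:ℝ)-k = -k + (3:ℕ) by push_cast; ring, Real.rpow_add ht]
      ring
    have h5 : t ^ (3-k) ≤ 1 := Real.rpow_le_one ht.le h1.le (by linarith)
    calc t ^ (-k) * Real.exp (-(ε/(4*t))) ≤ t ^ (-k) * (1728/ε^3 * t^(3:ℕ)) := by
          rw [← h3]; exact mul_le_mul_of_nonneg_left h2 (by positivity)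
      _ = 1728/ε^3 * t^(3-k) := h4
      _ ≤ 1728/ε^3 * 1 := by apply mul_le_mul_of_nonneg_left h5 (by positivity)
      _ = 1728/ε^3 := by ring
      _ ≤ _ := le_max_right _ _

lemma aux_continuousOn (k ε σ : ℝ) :
    ContinuousOn (fun t : ℝ => t ^ (-k) * Real.exp (-(ε/(4*t))) * Real.exp (-(σ*t)))
      (Set.Ioi 0) := by
  apply ContinuousOn.mul
  apply ContinuousOn.mul
  · intro t ht
    exact (Real.continuousAt_rpow_const t (-k) (Or.inl (ne_of_gt ht))).continuousWithinAt
  · apply Continuous.comp_continuousOn Real.continuous_exp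
    apply ContinuousOn.neg
    exact continuousOn_const.div (by fun_prop) (fun t ht => by have ht0 : (0:ℝ) < t := ht; positivity)
  · fun_prop

lemma aux_integrable {k ε σ : ℝ} (hk0 : 0 ≤ k) (hk3 : k ≤ 3) (hε : 0 < ε) (hσ : 0 < σ) :
    IntegrableOn (fun t : ℝ => t ^ (-k) * Real.exp (-(ε/(4*t))) * Real.exp (-(σ*t)))
      (Set.Ioi 0) := by
  apply Integrable.mono' ((exp_neg_integrableOn_Ioi 0 hσ).const_mul (max 1 (1728/ε^3)))
  · exact (aux_continuousOn k ε σ).aestronglyMeasurable measurableSet_Ioi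
  · filter_upwards [ae_restrict_mem measurableSet_Ioi] with t ht
    have ht' : (0:ℝ) < t := ht
    rw [Real.norm_eq_abs, _root_.abs_of_nonneg (by positivity), neg_mul]
    exact mul_le_mul_of_nonneg_right (rpow_exp_bound hk0 hk3 hε ht') (Real.exp_nonneg _)

/-- the normalized kernel -/
noncomputable def ker' (a z : ℂ) (t : ℝ) : ℂ :=
  Complex.exp (-z * t) * Complex.exp (-a^2 / (4*t)) * a * (↑(2 * Real.sqrt π * t ^ ((3:ℝ)/2)))⁻¹

lemma ker_eq_ker' (a z : ℂ) {t : ℝ} (ht : 0 < t) :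
    Complex.exp (-z * t) *
        (a / (2 * Real.sqrt π * (t : ℂ) ^ ((3 : ℂ) / 2)) *
          Complex.exp (-a ^ 2 / (4 * t))) = ker' a z t := by
  rw [ker', show ((3:ℂ)/2) = (((3:ℝ)/2 : ℝ) : ℂ) by norm_num,
    ← Complex.ofReal_cpow ht.le]
  push_cast
  ring

lemma kprod_norm (a z w : ℂ) {t : ℝ} (ht : 0 < t) :
    ‖Complex.exp (-z * t) * Complex.exp (-a^2 / (4*t)) * w *
      (↑(2 * Real.sqrt π * t ^ ((3:ℝ)/2)))⁻¹‖
    = Real.exp (-(z.re * t)) * Real.exp (-((a^2).re/(4*t))) * ‖w‖ *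
      (2 * Real.sqrt π * t ^ ((3:ℝ)/2))⁻¹ := by
  have hpos : (0:ℝ) < 2 * Real.sqrt π * t ^ ((3:ℝ)/2) := by
    have := Real.sqrt_pos.mpr Real.pi_pos
    positivity
  rw [norm_mul, norm_mul, norm_mul, norm_inv, Complex.norm_real, Real.norm_eq_abs,
    _root_.abs_of_pos hpos]
  congr 2
  · congr 2
    · rw [Complex.norm_exp]
      congr 1
      simp [Complex.neg_re, Complex.mul_re, Complex.ofReal_re, Complex.ofReal_im]
    · rw [Complex.norm_exp]
      congr 1
      rw [show -a^2/(4*(t:ℂ)) = -(a^2) / ((4*t : ℝ) : ℂ) by push_cast; ring,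
        Complex.div_ofReal_re]
      rw [Complex.neg_re]
      ring

lemma ker'_norm (a z : ℂ) {t : ℝ} (ht : 0 < t) :
    ‖ker' a z t‖ = Real.exp (-(z.re * t)) * Real.exp (-((a^2).re/(4*t))) * ‖a‖ *
      (2 * Real.sqrt π * t ^ ((3:ℝ)/2))⁻¹ := kprod_norm a z a ht

lemma ker'_continuousOn (a z : ℂ) : ContinuousOn (ker' a z) (Set.Ioi 0) := by
  apply ContinuousOn.mul
  · apply ContinuousOn.mul
    · apply ContinuousOn.mul
      · apply Continuous.continuousOn; fun_prop
      · apply Continuous.comp_continuousOn Complex.continuous_exp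
        apply ContinuousOn.div continuousOn_const (by fun_prop)
        intro t ht
        have ht0 : (0:ℝ) < t := ht
        simp only [ne_eq, mul_eq_zero]
        push_neg
        constructor
        · norm_num
        · exact_mod_cast ht0.ne'
    · exact continuousOn_const
  · apply ContinuousOn.inv₀
    · apply Complex.continuous_ofReal.comp_continuousOn
      apply ContinuousOn.mul continuousOn_const
      intro t ht
      exact (Real.continuousAt_rpow_const t _ (Or.inl (ne_of_gt ht))).continuousWithinAt
    · intro t ht
      have ht0 : (0:ℝ) < t := ht
      have := Real.sqrt_pos.mpr Real.pi_pos
      have hpos : (0:ℝ) < 2 * Real.sqrt π * t ^ ((3:ℝ)/2) := by positivity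
      exact_mod_cast hpos.ne'

lemma ker'_integrableOn {a z : ℂ} (ha2 : 0 < (a^2).re) (hz : 0 < z.re) :
    IntegrableOn (ker' a z) (Set.Ioi 0) := by
  have hsq := Real.sqrt_pos.mpr Real.pi_pos
  apply Integrable.mono'
    (((aux_integrable (k := 3/2) (by norm_num) (by norm_num) ha2 hz)).const_mul
      (‖a‖ * (2 * Real.sqrt π)⁻¹))
  · exact (ker'_continuousOn a z).aestronglyMeasurable measurableSet_Ioi
  · filter_upwards [ae_restrict_mem measurableSet_Ioi] with t ht
    have ht0 : (0:ℝ) < t := ht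
    rw [ker'_norm a z ht0]
    have h1 : t ^ (-(3/2 : ℝ)) = (t ^ ((3:ℝ)/2))⁻¹ := by
      rw [Real.rpow_neg ht0.le]
    rw [h1]
    have : Real.exp (-(z.re * t)) = Real.exp (-(z.re * t)) := rfl
    have ht32 : (0:ℝ) < t ^ ((3:ℝ)/2) := Real.rpow_pos_of_pos ht0 _
    rw [mul_inv, mul_inv]
    ring_nf
    apply le_of_eq
    ring


-- substitution u ↦ b/u maps Ioi 0 onto Ioi 0
lemma image_inv_mul (b : ℝ) (hb : 0 < b) : (fun u : ℝ => b / u) '' (Set.Ioi 0) = Set.Ioi 0 := by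
  ext x
  constructor
  · rintro ⟨u, hu, rfl⟩
    exact div_pos hb hu
  · intro hx
    exact ⟨b / x, div_pos hb hx, by field_simp⟩

lemma injOn_inv_mul (b : ℝ) (hb : 0 < b) : Set.InjOn (fun u : ℝ => b / u) (Set.Ioi 0) := by
  intro u hu v hv h
  simp only at h
  have hu' : (0:ℝ) < u := hu
  have hv' : (0:ℝ) < v := hv
  field_simp at h
  exact h.symm

lemma hasDeriv_inv_mul (b : ℝ) (u : ℝ) (hu : u ∈ Set.Ioi (0:ℝ)) :
    HasDerivWithinAt (fun u : ℝ => b / u) (-(b / u^2)) (Set.Ioi 0) u := by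
  have hu' : (0:ℝ) < u := hu
  have := (hasDerivAt_inv hu'.ne').const_mul b
  simpa [div_eq_mul_inv, neg_div, mul_div_assoc] using this.hasDerivWithinAt

-- key change of variables: for positive g
lemma integral_comp_inv (b : ℝ) (hb : 0 < b) (g : ℝ → ℝ) :
    ∫ u in Set.Ioi (0:ℝ), g u = ∫ u in Set.Ioi (0:ℝ), (b / u^2) * g (b / u) := by
  conv_lhs => rw [← image_inv_mul b hb]
  rw [integral_image_eq_integral_abs_deriv_smul measurableSet_Ioi
    (hasDeriv_inv_mul b) (injOn_inv_mul b hb) g]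
  apply setIntegral_congr_fun measurableSet_Ioi
  intro u hu
  have hu' : (0:ℝ) < u := hu
  simp only [smul_eq_mul, abs_neg]
  rw [abs_of_pos (by positivity)]

lemma image_sub_inv (b : ℝ) (hb : 0 < b) :
    (fun u : ℝ => u - b / u) '' (Set.Ioi 0) = Set.univ := by
  apply Set.eq_univ_of_forall
  intro v
  set D := Real.sqrt (v^2 + 4*b) with hD
  have hD2 : D^2 = v^2 + 4*b := Real.sq_sqrt (by positivity)
  have hDv : -v < D := by
    nlinarith [Real.sqrt_nonneg (v^2+4*b), hD2]
  set u := (v + D) / 2 with hu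
  have hu0 : 0 < u := by rw [hu]; linarith
  refine ⟨u, hu0, ?_⟩
  have : u^2 - b = v * u := by rw [hu]; nlinarith [hD2]
  field_simp
  nlinarith [this]

lemma injOn_sub_inv (b : ℝ) (hb : 0 < b) :
    Set.InjOn (fun u : ℝ => u - b / u) (Set.Ioi 0) := by
  intro u hu v hv h
  have hu' : (0:ℝ) < u := hu
  have hv' : (0:ℝ) < v := hv
  simp only at h
  have : (u - v) * (u * v + b) = 0 := by
    field_simp at h
    nlinarith [h]
  have h2 : u * v + b > 0 := by positivity
  have := mul_eq_zero.mp this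
  rcases this with h3 | h3
  · linarith
  · linarith

lemma hasDeriv_sub_inv (b : ℝ) (u : ℝ) (hu : u ∈ Set.Ioi (0:ℝ)) :
    HasDerivWithinAt (fun u : ℝ => u - b / u) (1 + b / u^2) (Set.Ioi 0) u := by
  have hu' : (0:ℝ) < u := hu
  have h1 := ((hasDerivAt_inv hu'.ne').const_mul b)
  have h2 := (hasDerivAt_id u).sub h1
  have : (1 : ℝ) - b * (-(u^2)⁻¹) = 1 + b / u^2 := by field_simp; ring
  simpa [div_eq_mul_inv, this, Pi.sub_def] using h2.hasDerivWithinAt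

lemma glasser_int1 {b : ℝ} (hb : 0 < b) :
    IntegrableOn (fun u : ℝ => Real.exp (-(u^2 + b^2/u^2))) (Set.Ioi 0) := by
  apply Integrable.mono' ((integrable_exp_neg_mul_sq one_pos).integrableOn (s := Set.Ioi 0))
  · apply ContinuousOn.aestronglyMeasurable _ measurableSet_Ioi
    apply Continuous.comp_continuousOn Real.continuous_exp
    apply ContinuousOn.neg
    apply ContinuousOn.add (by fun_prop)
    exact continuousOn_const.div (by fun_prop) (fun u hu => by
      have hu0 : (0:ℝ) < u := hu; positivity)
  · filter_upwards [ae_restrict_mem measurableSet_Ioi] with u hu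
    have hu0 : (0:ℝ) < u := hu
    rw [Real.norm_eq_abs, _root_.abs_of_pos (Real.exp_pos _)]
    apply Real.exp_le_exp.mpr
    have hb2 : 0 ≤ b^2/u^2 := by positivity
    linarith

lemma glasser_int2 {b : ℝ} (hb : 0 < b) :
    IntegrableOn (fun u : ℝ => b/u^2 * Real.exp (-(u^2 + b^2/u^2))) (Set.Ioi 0) := by
  set M := max 1 (1728/(4*b^2)^3) with hM
  have hM0 : 0 < M := lt_of_lt_of_le one_pos (le_max_left _ _)
  apply Integrable.mono'
    (((integrable_exp_neg_mul_sq one_pos).integrableOn (s := Set.Ioi 0)).const_mul (b * M))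
  · apply ContinuousOn.aestronglyMeasurable _ measurableSet_Ioi
    apply ContinuousOn.mul
    · exact continuousOn_const.div (by fun_prop) (fun u hu => by
        have hu0 : (0:ℝ) < u := hu; positivity)
    · apply Continuous.comp_continuousOn Real.continuous_exp
      apply ContinuousOn.neg
      apply ContinuousOn.add (by fun_prop)
      exact continuousOn_const.div (by fun_prop) (fun u hu => by
        have hu0 : (0:ℝ) < u := hu; positivity)
  · filter_upwards [ae_restrict_mem measurableSet_Ioi] with u hu
    have hu0 : (0:ℝ) < u := hu
    rw [Real.norm_eq_abs, _root_.abs_of_pos (by positivity)]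
    have key : (u^2)⁻¹ * Real.exp (-(b^2/u^2)) ≤ M := by
      have h1 : (u^2 : ℝ) ^ (-(1:ℝ)) * Real.exp (-((4*b^2)/(4*(u^2)))) ≤ M :=
        rpow_exp_bound (by norm_num) (by norm_num) (by positivity) (by positivity)
      have h2 : (u^2 : ℝ) ^ (-(1:ℝ)) = (u^2)⁻¹ := by
        rw [Real.rpow_neg (by positivity), Real.rpow_one]
      have h3 : (4*b^2)/(4*(u^2)) = b^2/u^2 := by field_simp
      rw [h2, h3] at h1
      exact h1
    have expand : Real.exp (-(u^2 + b^2/u^2)) = Real.exp (-(b^2/u^2)) * Real.exp (-u^2) := by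
      rw [← Real.exp_add]; ring_nf
    calc b/u^2 * Real.exp (-(u^2 + b^2/u^2))
        = b * ((u^2)⁻¹ * Real.exp (-(b^2/u^2))) * Real.exp (-u^2) := by
          rw [expand]; ring
      _ ≤ b * M * Real.exp (-u^2) := by
          apply mul_le_mul_of_nonneg_right _ (Real.exp_nonneg _)
          exact mul_le_mul_of_nonneg_left key hb.le
      _ = b * M * Real.exp (-1*u^2) := by norm_num

theorem glasser {b : ℝ} (hb : 0 < b) :
    ∫ u in Set.Ioi (0:ℝ), Real.exp (-(u^2 + b^2/u^2)) = Real.sqrt π / 2 * Real.exp (-(2*b)) := by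
  set J := ∫ u in Set.Ioi (0:ℝ), Real.exp (-(u^2 + b^2/u^2)) with hJ
  have step2 : J = ∫ u in Set.Ioi (0:ℝ), b/u^2 * Real.exp (-(u^2 + b^2/u^2)) := by
    rw [hJ, integral_comp_inv b hb (fun u => Real.exp (-(u^2 + b^2/u^2)))]
    apply setIntegral_congr_fun measurableSet_Ioi
    intro u hu
    have hu0 : (0:ℝ) < u := hu
    simp only
    congr 2
    rw [div_pow]
    field_simp
    ring
  have hsum : J + J = ∫ u in Set.Ioi (0:ℝ),
      (1 + b/u^2) * Real.exp (-(u^2 + b^2/u^2)) := by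
    nth_rewrite 2 [step2]
    rw [hJ, ← integral_add (glasser_int1 hb) (glasser_int2 hb)]
    apply setIntegral_congr_fun measurableSet_Ioi
    intro u hu
    simp only
    ring
  have key : ∫ u in Set.Ioi (0:ℝ), (1 + b/u^2) * Real.exp (-(u^2 + b^2/u^2))
      = Real.exp (-(2*b)) * Real.sqrt π := by
    have hgauss : ∫ v : ℝ, Real.exp (-(v^2)) = Real.sqrt π := by
      have := integral_gaussian 1
      simpa using this
    have himg : ∫ v in (fun u : ℝ => u - b / u) '' (Set.Ioi 0), Real.exp (-(v^2))
        = ∫ u in Set.Ioi (0:ℝ), |1 + b/u^2| • Real.exp (-(((fun u : ℝ => u - b / u) u)^2)) :=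
      integral_image_eq_integral_abs_deriv_smul measurableSet_Ioi
        (hasDeriv_sub_inv b) (injOn_sub_inv b hb) (fun v => Real.exp (-(v^2)))
    rw [image_sub_inv b hb] at himg
    rw [Measure.restrict_univ] at himg
    rw [hgauss] at himg
    rw [himg, ← MeasureTheory.integral_const_mul]
    apply setIntegral_congr_fun measurableSet_Ioi
    intro u hu
    have hu0 : (0:ℝ) < u := hu
    have hpos : (0:ℝ) < 1 + b/u^2 := by positivity
    simp only [smul_eq_mul, _root_.abs_of_pos hpos]
    rw [show Real.exp (-(2*b)) * ((1 + b/u^2) * Real.exp (-(u - b/u)^2))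
        = (1 + b/u^2) * (Real.exp (-(2*b)) * Real.exp (-(u - b/u)^2)) by ring,
      ← Real.exp_add]
    congr 2
    have : (u - b/u)^2 = u^2 - 2*b + b^2/u^2 := by
      field_simp
      ring
    rw [this]
    ring
  have : J + J = Real.exp (-(2*b)) * Real.sqrt π := by rw [hsum, key]
  linarith

lemma image_inv_sq (c : ℝ) (hc : 0 < c) :
    (fun u : ℝ => c / u^2) '' (Set.Ioi 0) = Set.Ioi 0 := by
  ext t
  constructor
  · rintro ⟨u, hu, rfl⟩
    have hu0 : (0:ℝ) < u := hu
    exact div_pos hc (by positivity)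
  · intro ht
    have ht0 : (0:ℝ) < t := ht
    refine ⟨Real.sqrt (c/t), Real.sqrt_pos.mpr (by positivity), ?_⟩
    simp only
    rw [Real.sq_sqrt (show (0:ℝ) ≤ c/t by positivity)]
    field_simp

lemma injOn_inv_sq (c : ℝ) (hc : 0 < c) :
    Set.InjOn (fun u : ℝ => c / u^2) (Set.Ioi 0) := by
  intro u hu v hv h
  have hu0 : (0:ℝ) < u := hu
  have hv0 : (0:ℝ) < v := hv
  simp only at h
  field_simp at h
  exact (pow_left_inj₀ hu0.le hv0.le two_ne_zero).mp h.symm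

lemma hasDeriv_inv_sq (c : ℝ) (u : ℝ) (hu : u ∈ Set.Ioi (0:ℝ)) :
    HasDerivWithinAt (fun u : ℝ => c / u^2) (-(2*c/u^3)) (Set.Ioi 0) u := by
  have hu0 : (0:ℝ) < u := hu
  have h1 : HasDerivAt (fun u : ℝ => u^2) (2*u) u := by
    simpa [mul_comm] using hasDerivAt_pow 2 u
  have h2 := (h1.inv (show u^2 ≠ 0 by positivity)).const_mul c
  have h3 : HasDerivAt (fun u : ℝ => c/u^2) (-(2*c/u^3)) u := by
    have e : -(2*c/u^3) = c * (-(2 * u) / (u ^ 2) ^ 2) := by field_simp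
    rw [e]
    exact h2.congr_of_eventuallyEq (Filter.Eventually.of_forall fun y => by simp [div_eq_mul_inv])
  exact h3.hasDerivWithinAt

lemma integral_comp_inv_sq (c : ℝ) (hc : 0 < c) (g : ℝ → ℝ) :
    ∫ t in Set.Ioi (0:ℝ), g t = ∫ u in Set.Ioi (0:ℝ), (2*c/u^3) * g (c/u^2) := by
  conv_lhs => rw [← image_inv_sq c hc]
  rw [integral_image_eq_integral_abs_deriv_smul measurableSet_Ioi
    (hasDeriv_inv_sq c) (injOn_inv_sq c hc) g]
  apply setIntegral_congr_fun measurableSet_Ioi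
  intro u hu
  have hu0 : (0:ℝ) < u := hu
  simp only [smul_eq_mul, abs_neg]
  rw [_root_.abs_of_pos (by positivity)]

theorem real_case {α ζ : ℝ} (hα : 0 < α) (hζ : 0 < ζ) :
    ∫ t in Set.Ioi (0:ℝ),
      Real.exp (-(ζ*t)) * (α/(2*Real.sqrt π*t^((3:ℝ)/2)) * Real.exp (-(α^2/(4*t))))
    = Real.exp (-(α * Real.sqrt ζ)) := by
  have hsπ := Real.sqrt_pos.mpr Real.pi_pos
  set c := α^2/4 with hc
  have hc0 : 0 < c := by positivity
  set b := α * Real.sqrt ζ / 2 with hb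
  have hsζ := Real.sqrt_pos.mpr hζ
  have hb0 : 0 < b := by positivity
  rw [integral_comp_inv_sq c hc0]
  have congr1 : ∀ u ∈ Set.Ioi (0:ℝ),
      (2*c/u^3) * (Real.exp (-(ζ*(c/u^2))) *
        (α/(2*Real.sqrt π*(c/u^2)^((3:ℝ)/2)) * Real.exp (-(α^2/(4*(c/u^2))))))
      = 2/Real.sqrt π * Real.exp (-(u^2 + b^2/u^2)) := by
    intro u hu
    have hu0 : (0:ℝ) < u := hu
    have hcu : (0:ℝ) < c/u^2 := by positivity
    have hrpow : (c/u^2)^((3:ℝ)/2) = (α/(2*u))^3 := by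
      have h1 : c/u^2 = (α/(2*u))^2 := by rw [hc]; field_simp; ring
      rw [h1, ← Real.rpow_natCast (α/(2*u)) 2, ← Real.rpow_mul (by positivity),
        show ((2:ℕ):ℝ) * ((3:ℝ)/2) = ((3:ℕ):ℝ) by norm_num, Real.rpow_natCast]
    have harg1 : ζ*(c/u^2) = b^2/u^2 := by
      rw [hc, hb]
      rw [div_pow, mul_pow]
      rw [Real.sq_sqrt hζ.le]
      field_simp
      ring
    have harg2 : α^2/(4*(c/u^2)) = u^2 := by
      rw [hc]; field_simp
    rw [hrpow, harg1, harg2]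
    have hcoef : (2*c/u^3) * (α/(2*Real.sqrt π*(α/(2*u))^3)) = 2/Real.sqrt π := by
      rw [hc]; field_simp; ring
    calc (2*c/u^3) * (Real.exp (-(b^2/u^2)) *
          (α/(2*Real.sqrt π*(α/(2*u))^3) * Real.exp (-u^2)))
        = ((2*c/u^3) * (α/(2*Real.sqrt π*(α/(2*u))^3))) *
            (Real.exp (-(b^2/u^2)) * Real.exp (-u^2)) := by ring
      _ = 2/Real.sqrt π * Real.exp (-(b^2/u^2) + -u^2) := by rw [hcoef, Real.exp_add]
      _ = 2/Real.sqrt π * Real.exp (-(u^2 + b^2/u^2)) := by ring_nf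
  rw [setIntegral_congr_fun measurableSet_Ioi congr1, MeasureTheory.integral_const_mul,
    glasser hb0]
  rw [show -(2*b) = -(α*Real.sqrt ζ) by rw [hb]; ring]
  field_simp


noncomputable def Phi (a z : ℂ) : ℂ := ∫ t in Set.Ioi (0:ℝ), ker' a z t

lemma Phi_real {α ζ : ℝ} (hα : 0 < α) (hζ : 0 < ζ) :
    Phi α ζ = Complex.exp (-(α:ℂ) * (ζ:ℂ)^((1:ℂ)/2)) := by
  have heq : ∀ t ∈ Set.Ioi (0:ℝ), ker' (α:ℂ) (ζ:ℂ) t =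
      ((Real.exp (-(ζ*t)) * (α/(2*Real.sqrt π*t^((3:ℝ)/2)) * Real.exp (-(α^2/(4*t)))) : ℝ) : ℂ) := by
    intro t ht
    have ht0 : (0:ℝ) < t := ht
    have hd : (2 * Real.sqrt π * t ^ ((3:ℝ)/2)) ≠ 0 := by
      have := Real.sqrt_pos.mpr Real.pi_pos
      positivity
    rw [ker']
    push_cast [Complex.ofReal_exp]
    rw [div_eq_mul_inv (α:ℂ)]
    ring_nf
  have hPhi : Phi α ζ = ((∫ t in Set.Ioi (0:ℝ),
      Real.exp (-(ζ*t)) * (α/(2*Real.sqrt π*t^((3:ℝ)/2)) * Real.exp (-(α^2/(4*t)))) : ℝ) : ℂ) := by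
    rw [Phi, setIntegral_congr_fun measurableSet_Ioi heq]
    exact integral_ofReal
  rw [hPhi, real_case hα hζ]
  have h12 : ((ζ:ℂ))^((1:ℂ)/2) = ((Real.sqrt ζ : ℝ) : ℂ) := by
    rw [show ((1:ℂ)/2) = (((1:ℝ)/2 : ℝ) : ℂ) by norm_num, ← Complex.ofReal_cpow hζ.le]
    congr 1
    rw [Real.sqrt_eq_rpow]
  rw [h12, Complex.ofReal_exp]
  congr 1
  push_cast
  ring


lemma re_ge_of_ball {z z₀ : ℂ} {ε : ℝ} (hz : z ∈ Metric.ball z₀ ε) : z₀.re - ε ≤ z.re := by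
  have h1 : dist z z₀ < ε := hz
  have h2 : |(z - z₀).re| ≤ ‖z - z₀‖ := Complex.abs_re_le_norm _
  rw [Complex.dist_eq] at h1
  have := abs_le.mp h2
  have h3 : (z - z₀).re = z.re - z₀.re := by simp [Complex.sub_re]
  linarith [this.1]

lemma Phi_diff_z {a : ℂ} (ha2 : 0 < (a^2).re) :
    DifferentiableOn ℂ (fun z => Phi a z) {z : ℂ | 0 < z.re} := by
  intro z₀ hz₀
  apply DifferentiableAt.differentiableWithinAt
  have hσ0 : 0 < z₀.re := hz₀
  have hsπ := Real.sqrt_pos.mpr Real.pi_pos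
  have key := hasDerivAt_integral_of_dominated_loc_of_deriv_le
    (μ := volume.restrict (Set.Ioi 0)) (x₀ := z₀)
    (F := fun z t => ker' a z t) (F' := fun z t => (-(t:ℂ)) * ker' a z t)
    (s := Metric.ball z₀ (z₀.re/2))
    (bound := fun t => (‖a‖/(2*Real.sqrt π)) *
        (t^(-(1/2):ℝ) * Real.exp (-((a^2).re/(4*t))) * Real.exp (-(z₀.re/2*t))))
    (Metric.ball_mem_nhds _ (by positivity))
    (Filter.Eventually.of_forall (fun z =>
      (ker'_continuousOn a z).aestronglyMeasurable measurableSet_Ioi))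
    (ker'_integrableOn ha2 hz₀)
    (((Complex.continuous_ofReal.comp continuous_id).neg.continuousOn.mul
      (ker'_continuousOn a z₀)).aestronglyMeasurable measurableSet_Ioi)
    ?_ ?_ ?_
  · exact key.2.differentiableAt
  · -- h_bound
    filter_upwards [ae_restrict_mem measurableSet_Ioi] with t ht
    intro z hzball
    have ht0 : (0:ℝ) < t := ht
    have hre : z₀.re/2 ≤ z.re := by
      have := re_ge_of_ball hzball
      linarith
    have hnorm : ‖(-(t:ℂ)) * ker' a z t‖ = t * ‖ker' a z t‖ := by
      rw [norm_mul, norm_neg, Complex.norm_real, Real.norm_eq_abs, _root_.abs_of_pos ht0]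
    rw [hnorm, ker'_norm a z ht0]
    have htpow : t * (2 * Real.sqrt π * t ^ ((3:ℝ)/2))⁻¹
        = (2*Real.sqrt π)⁻¹ * t^(-(1/2):ℝ) := by
      rw [mul_inv, ← Real.rpow_neg ht0.le]
      rw [show t * ((2*Real.sqrt π)⁻¹ * t ^ (-((3:ℝ)/2)))
          = (2*Real.sqrt π)⁻¹ * (t^(1:ℝ) * t ^ (-((3:ℝ)/2))) by rw [Real.rpow_one]; ring,
        ← Real.rpow_add ht0]
      norm_num
    have heq : t * (Real.exp (-(z.re * t)) * Real.exp (-((a^2).re/(4*t))) * ‖a‖ *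
        (2 * Real.sqrt π * t ^ ((3:ℝ)/2))⁻¹)
        = (‖a‖/(2*Real.sqrt π)) * (t^(-(1/2):ℝ) * Real.exp (-((a^2).re/(4*t)))) *
          Real.exp (-(z.re*t)) := by
      rw [show t * (Real.exp (-(z.re * t)) * Real.exp (-((a^2).re/(4*t))) * ‖a‖ *
          (2 * Real.sqrt π * t ^ ((3:ℝ)/2))⁻¹)
          = (t * (2 * Real.sqrt π * t ^ ((3:ℝ)/2))⁻¹) * Real.exp (-(z.re * t)) *
            Real.exp (-((a^2).re/(4*t))) * ‖a‖ by ring, htpow]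
      ring
    rw [show t * (Real.exp (-(z.re * t)) * Real.exp (-((a^2).re/(4*t))) * ‖a‖ *
          (2 * Real.sqrt π * t ^ ((3:ℝ)/2))⁻¹)
        = (‖a‖/(2*Real.sqrt π)) * (t^(-(1/2):ℝ) * Real.exp (-((a^2).re/(4*t)))) *
          Real.exp (-(z.re*t)) from heq]
    rw [show (‖a‖/(2*Real.sqrt π)) * (t^(-(1/2):ℝ) * Real.exp (-((a^2).re/(4*t))) *
          Real.exp (-(z₀.re/2*t)))
        = (‖a‖/(2*Real.sqrt π)) * (t^(-(1/2):ℝ) * Real.exp (-((a^2).re/(4*t)))) *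
          Real.exp (-(z₀.re/2*t)) by ring]
    apply mul_le_mul_of_nonneg_left _ (by positivity)
    apply Real.exp_le_exp.mpr
    nlinarith
  · -- bound integrable
    exact (aux_integrable (k := 1/2) (by norm_num) (by norm_num) ha2 (by positivity)).const_mul _
  · -- h_diff
    filter_upwards [ae_restrict_mem measurableSet_Ioi] with t ht
    intro z hzball
    have hd : HasDerivAt (fun z : ℂ => Complex.exp (-z * t)) ((-(t:ℂ)) * Complex.exp (-z * t)) z := by
      have h1 : HasDerivAt (fun z : ℂ => -z * t) (-(t:ℂ)) z := by
        simpa using ((hasDerivAt_id z).neg.mul_const (t:ℂ))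
      simpa [mul_comm] using h1.cexp
    have := ((hd.mul_const (Complex.exp (-a^2 / (4*t)))).mul_const a).mul_const
      ((↑(2 * Real.sqrt π * t ^ ((3:ℝ)/2)))⁻¹ : ℂ)
    have e : (-(t:ℂ)) * ker' a z t = (-(t:ℂ)) * Complex.exp (-z * t) * Complex.exp (-a^2 / (4*t)) * a *
        ((↑(2 * Real.sqrt π * t ^ ((3:ℝ)/2)))⁻¹ : ℂ) := by
      rw [ker']
      ring
    exact (this.congr_of_eventuallyEq (Filter.Eventually.of_forall fun w => by rw [ker'])).congr_deriv e.symm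


lemma Phi_diff_a {z : ℂ} (hz : 0 < z.re) :
    DifferentiableOn ℂ (fun a => Phi a z) {a : ℂ | 0 < a.re ∧ 0 < (a^2).re} := by
  intro a₀ ha₀
  apply DifferentiableAt.differentiableWithinAt
  obtain ⟨ha₀re, ha₀2⟩ := ha₀
  have hsπ := Real.sqrt_pos.mpr Real.pi_pos
  have hcont : ContinuousAt (fun a : ℂ => (a^2).re) a₀ :=
    (Complex.continuous_re.comp (continuous_pow 2)).continuousAt
  obtain ⟨ε, hε0, hball⟩ := Metric.mem_nhds_iff.mp
    (hcont.preimage_mem_nhds (Ioi_mem_nhds (by linarith : (a₀^2).re/2 < (a₀^2).re)))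
  set ε₀ := (a₀^2).re/2 with hε₀def
  have hε₀0 : 0 < ε₀ := by rw [hε₀def]; linarith
  set M := ‖a₀‖ + ε with hMdef
  have hM0 : 0 < M := by
    have := norm_nonneg a₀
    rw [hMdef]; linarith
  have key := hasDerivAt_integral_of_dominated_loc_of_deriv_le
    (μ := volume.restrict (Set.Ioi 0)) (x₀ := a₀)
    (F := fun a t => ker' a z t)
    (F' := fun a t => Complex.exp (-z * t) * Complex.exp (-a^2 / (4*t)) * (1 - a^2/(2*t)) *
      (↑(2 * Real.sqrt π * t ^ ((3:ℝ)/2)))⁻¹)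
    (s := Metric.ball a₀ ε)
    (bound := fun t => (2*Real.sqrt π)⁻¹ *
        ((t^(-((3:ℝ)/2)) * Real.exp (-(ε₀/(4*t))) * Real.exp (-(z.re*t))) +
          M^2/2 * (t^(-((5:ℝ)/2)) * Real.exp (-(ε₀/(4*t))) * Real.exp (-(z.re*t)))))
    (Metric.ball_mem_nhds _ hε0)
    (Filter.Eventually.of_forall (fun a =>
      (ker'_continuousOn a z).aestronglyMeasurable measurableSet_Ioi))
    (ker'_integrableOn ha₀2 hz)
    ?_ ?_ ?_ ?_
  · exact key.2.differentiableAt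
  · -- measurability of F' a₀
    apply ContinuousOn.aestronglyMeasurable _ measurableSet_Ioi
    apply ContinuousOn.mul
    apply ContinuousOn.mul
    apply ContinuousOn.mul
    · fun_prop
    · apply Continuous.comp_continuousOn Complex.continuous_exp
      apply ContinuousOn.div continuousOn_const (by fun_prop)
      intro t ht
      have ht0 : (0:ℝ) < t := ht
      simp only [ne_eq, mul_eq_zero]
      push_neg
      exact ⟨by norm_num, by exact_mod_cast ht0.ne'⟩
    · apply ContinuousOn.sub continuousOn_const
      apply ContinuousOn.div continuousOn_const (by fun_prop)
      intro t ht
      have ht0 : (0:ℝ) < t := ht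
      simp only [ne_eq, mul_eq_zero]
      push_neg
      exact ⟨by norm_num, by exact_mod_cast ht0.ne'⟩
    · apply ContinuousOn.inv₀
      · apply Complex.continuous_ofReal.comp_continuousOn
        apply ContinuousOn.mul continuousOn_const
        intro t ht
        exact (Real.continuousAt_rpow_const t _ (Or.inl (ne_of_gt ht))).continuousWithinAt
      · intro t ht
        have ht0 : (0:ℝ) < t := ht
        have hpos : (0:ℝ) < 2 * Real.sqrt π * t ^ ((3:ℝ)/2) := by positivity
        exact_mod_cast hpos.ne'
  · -- bound
    filter_upwards [ae_restrict_mem measurableSet_Ioi] with t ht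
    intro a haball
    have ht0 : (0:ℝ) < t := ht
    have ha2ε : ε₀ ≤ (a^2).re := le_of_lt (hball haball)
    have haM : ‖a‖ ≤ M := by
      have h1 : dist a a₀ < ε := haball
      rw [dist_eq_norm] at h1
      calc ‖a‖ = ‖a₀ + (a - a₀)‖ := by ring_nf
        _ ≤ ‖a₀‖ + ‖a - a₀‖ := norm_add_le _ _
        _ ≤ M := by rw [hMdef]; linarith
    rw [kprod_norm a z _ ht0]
    have hw : ‖1 - a^2/(2*(t:ℂ))‖ ≤ 1 + M^2/(2*t) := by
      calc ‖1 - a^2/(2*(t:ℂ))‖ ≤ ‖(1:ℂ)‖ + ‖a^2/(2*(t:ℂ))‖ := norm_sub_le _ _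
        _ = 1 + ‖a‖^2 / ‖2*(t:ℂ)‖ := by rw [norm_div, norm_pow, norm_one]
        _ = 1 + ‖a‖^2 / (2*t) := by
            congr 2
            rw [show (2*(t:ℂ)) = ((2*t : ℝ) : ℂ) by push_cast; ring, Complex.norm_real,
              Real.norm_eq_abs, _root_.abs_of_pos (by positivity)]
        _ ≤ 1 + M^2/(2*t) := by
            have : ‖a‖^2 ≤ M^2 := by nlinarith [norm_nonneg a]
            have h2t : (0:ℝ) < 2*t := by positivity
            gcongr
    have hexple : Real.exp (-((a^2).re/(4*t))) ≤ Real.exp (-(ε₀/(4*t))) := by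
      apply Real.exp_le_exp.mpr
      have h5 : ε₀/(4*t) ≤ (a^2).re/(4*t) :=
        div_le_div_of_nonneg_right ha2ε (by positivity) -- maybe wrong name
      linarith
    calc Real.exp (-(z.re * t)) * Real.exp (-((a^2).re/(4*t))) * ‖1 - a^2/(2*(t:ℂ))‖ *
        (2 * Real.sqrt π * t ^ ((3:ℝ)/2))⁻¹
        ≤ Real.exp (-(z.re * t)) * Real.exp (-(ε₀/(4*t))) * (1 + M^2/(2*t)) *
          (2 * Real.sqrt π * t ^ ((3:ℝ)/2))⁻¹ := by
          have hI : (0:ℝ) ≤ (2 * Real.sqrt π * t ^ ((3:ℝ)/2))⁻¹ := by positivity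
          apply mul_le_mul_of_nonneg_right _ hI
          apply mul_le_mul (mul_le_mul_of_nonneg_left hexple (Real.exp_nonneg _)) hw
            (norm_nonneg _) (by positivity)
      _ = (2*Real.sqrt π)⁻¹ *
          ((t^(-((3:ℝ)/2)) * Real.exp (-(ε₀/(4*t))) * Real.exp (-(z.re*t))) +
            M^2/2 * (t^(-((5:ℝ)/2)) * Real.exp (-(ε₀/(4*t))) * Real.exp (-(z.re*t)))) := by
          have e1 : (t ^ ((3:ℝ)/2))⁻¹ = t ^ (-((3:ℝ)/2)) := (Real.rpow_neg ht0.le _).symm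
          have e2 : t ^ (-((3:ℝ)/2)) * t⁻¹ = t ^ (-((5:ℝ)/2)) := by
            rw [show t⁻¹ = t^(-(1:ℝ)) by rw [Real.rpow_neg_one], ← Real.rpow_add ht0]
            norm_num
          rw [mul_inv, e1, ← e2]
          ring
  · -- bound integrable
    apply Integrable.const_mul
    exact (aux_integrable (by norm_num) (by norm_num) hε₀0 hz).add
      ((aux_integrable (by norm_num) (by norm_num) hε₀0 hz).const_mul _)
  · -- derivative
    filter_upwards [ae_restrict_mem measurableSet_Ioi] with t ht
    intro a haball
    have ht0 : (0:ℝ) < t := ht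
    have ht0' : (4*(t:ℂ)) ≠ 0 := by
      simp only [ne_eq, mul_eq_zero]
      push_neg
      exact ⟨by norm_num, by exact_mod_cast ht0.ne'⟩
    have hq : HasDerivAt (fun a : ℂ => -a^2/(4*(t:ℝ))) (-(2*a)/(4*(t:ℝ))) a := by
      have h1 : HasDerivAt (fun a : ℂ => a^2) (2*a) a := by
        simpa using hasDerivAt_pow 2 a
      simpa [neg_div] using (h1.neg.div_const (4*(t:ℝ)))
    have hexp : HasDerivAt (fun a : ℂ => Complex.exp (-a^2/(4*(t:ℝ))))
        (-(2*a)/(4*(t:ℝ)) * Complex.exp (-a^2/(4*(t:ℝ)))) a := by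
      simpa [mul_comm] using hq.cexp
    have hprod : HasDerivAt (fun a : ℂ => Complex.exp (-a^2/(4*(t:ℝ))) * a)
        (-(2*a)/(4*(t:ℝ)) * Complex.exp (-a^2/(4*(t:ℝ))) * a +
          Complex.exp (-a^2/(4*(t:ℝ)))) a := by
      simpa [Pi.mul_def] using hexp.mul (hasDerivAt_id a)
    have hfull := (hprod.const_mul (Complex.exp (-z * t))).mul_const
      ((↑(2 * Real.sqrt π * t ^ ((3:ℝ)/2)))⁻¹ : ℂ)
    have e : Complex.exp (-z * t) * Complex.exp (-a^2 / (4*t)) * (1 - a^2/(2*t)) *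
        (↑(2 * Real.sqrt π * t ^ ((3:ℝ)/2)))⁻¹ = Complex.exp (-z * t) * (-(2 * a) / (4 * t) *
        Complex.exp (-a ^ 2 / (4 * t)) * a + Complex.exp (-a ^ 2 / (4 * t))) *
        (↑(2 * Real.sqrt π * t ^ ((3:ℝ) / 2)))⁻¹ := by
      have htC : (t:ℂ) ≠ 0 := by exact_mod_cast ht0.ne'
      field_simp
      ring
    exact (hfull.congr_of_eventuallyEq (Filter.Eventually.of_forall fun b => by rw [ker']; ring)).congr_deriv e.symm


lemma seq_tendsto : Tendsto (fun n : ℕ => ((1 + ((n:ℝ)+1)⁻¹ : ℝ) : ℂ)) atTop (nhdsWithin 1 {(1:ℂ)}ᶜ) := by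
  apply tendsto_nhdsWithin_of_tendsto_nhds_of_eventually_within
  · have hr : Tendsto (fun n : ℕ => (1 + ((n:ℝ)+1)⁻¹ : ℝ)) atTop (nhds 1) := by
      have := tendsto_one_div_add_atTop_nhds_zero_nat (𝕜 := ℝ)
      simp only [one_div] at this
      simpa using tendsto_const_nhds.add this
    have h2 := (Complex.continuous_ofReal.tendsto (1:ℝ)).comp hr
    rw [show ((1:ℝ):ℂ) = (1:ℂ) by norm_num] at h2
    exact h2
  · apply Filter.Eventually.of_forall
    intro n
    simp only [Set.mem_compl_iff, Set.mem_singleton_iff]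
    intro h
    rw [show (1:ℂ) = ((1:ℝ):ℂ) by norm_num] at h
    have := Complex.ofReal_injective h
    have hpos : (0:ℝ) < ((n:ℝ)+1)⁻¹ := by positivity
    linarith

lemma seq_pos (n : ℕ) : (0:ℝ) < 1 + ((n:ℝ)+1)⁻¹ := by positivity

lemma step1 {α : ℝ} (hα : 0 < α) {z : ℂ} (hz : 0 < z.re) :
    Phi α z = Complex.exp (-(α:ℂ) * z^((1:ℂ)/2)) := by
  have ha2 : 0 < (((α:ℂ))^2).re := by
    rw [show ((α:ℂ))^2 = ((α^2 : ℝ) : ℂ) by push_cast; ring, Complex.ofReal_re]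
    positivity
  have hU_open : IsOpen {z : ℂ | 0 < z.re} := by
    exact isOpen_lt continuous_const Complex.continuous_re
  have hU_conn : IsPreconnected {z : ℂ | 0 < z.re} :=
    (convex_halfSpace_re_gt 0).isPreconnected
  have hf : AnalyticOnNhd ℂ (fun z => Phi α z) {z : ℂ | 0 < z.re} :=
    (Phi_diff_z ha2).analyticOnNhd hU_open
  have hg : AnalyticOnNhd ℂ (fun z => Complex.exp (-(α:ℂ) * z^((1:ℂ)/2)))
      {z : ℂ | 0 < z.re} := by
    apply DifferentiableOn.analyticOnNhd _ hU_open
    intro w hw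
    apply DifferentiableAt.differentiableWithinAt
    apply DifferentiableAt.cexp
    apply DifferentiableAt.const_mul
    apply DifferentiableAt.cpow differentiableAt_id (differentiableAt_const _)
    exact Or.inl hw
  have hfreq : ∃ᶠ w in nhdsWithin 1 {(1:ℂ)}ᶜ,
      Phi α w = Complex.exp (-(α:ℂ) * w^((1:ℂ)/2)) := by
    apply seq_tendsto.frequently
    apply Filter.Eventually.frequently
    apply Filter.Eventually.of_forall
    intro n
    exact Phi_real hα (seq_pos n)
  have h1U : (1:ℂ) ∈ {z : ℂ | 0 < z.re} := by simp
  exact hf.eqOn_of_preconnected_of_frequently_eq hg hU_conn h1U hfreq hz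

lemma omega_eq :
    {a : ℂ | 0 < a.re ∧ 0 < (a^2).re}
      = {a : ℂ | 0 < a.re - a.im} ∩ {a : ℂ | 0 < a.re + a.im} := by
  ext a
  simp only [Set.mem_setOf_eq, Set.mem_inter_iff]
  have hre : (a^2).re = a.re*a.re - a.im*a.im := by
    rw [sq, Complex.mul_re]
  rw [hre]
  constructor
  · rintro ⟨h1, h2⟩
    constructor <;> nlinarith
  · rintro ⟨h1, h2⟩
    constructor <;> nlinarith

lemma omega_conn : IsPreconnected {a : ℂ | 0 < a.re ∧ 0 < (a^2).re} := by
  rw [omega_eq]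
  apply Convex.isPreconnected
  apply Convex.inter
  · exact convex_halfSpace_gt (⟨fun x y => by simp; ring, fun c x => by
      simp [Complex.smul_re, Complex.smul_im]; ring⟩ : IsLinearMap ℝ fun a : ℂ => a.re - a.im) 0
  · exact convex_halfSpace_gt (⟨fun x y => by simp; ring, fun c x => by
      simp [Complex.smul_re, Complex.smul_im]; ring⟩ : IsLinearMap ℝ fun a : ℂ => a.re + a.im) 0

lemma omega_open : IsOpen {a : ℂ | 0 < a.re ∧ 0 < (a^2).re} := by
  apply IsOpen.inter (s := {a : ℂ | 0 < a.re}) (t := {a : ℂ | 0 < (a^2).re})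
  · exact isOpen_lt continuous_const Complex.continuous_re
  · exact isOpen_lt continuous_const (Complex.continuous_re.comp (continuous_pow 2))

lemma step2 {a z : ℂ} (ha : 0 < a.re) (ha2 : 0 < (a^2).re) (hz : 0 < z.re) :
    Phi a z = Complex.exp (-a * z^((1:ℂ)/2)) := by
  have hf : AnalyticOnNhd ℂ (fun a => Phi a z) {a : ℂ | 0 < a.re ∧ 0 < (a^2).re} :=
    (Phi_diff_a hz).analyticOnNhd omega_open
  have hg : AnalyticOnNhd ℂ (fun a => Complex.exp (-a * z^((1:ℂ)/2)))
      {a : ℂ | 0 < a.re ∧ 0 < (a^2).re} := by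
    apply DifferentiableOn.analyticOnNhd _ omega_open
    intro w hw
    apply DifferentiableAt.differentiableWithinAt
    exact (differentiableAt_id.neg.mul_const _).cexp
  have hfreq : ∃ᶠ w in nhdsWithin 1 {(1:ℂ)}ᶜ,
      Phi w z = Complex.exp (-w * z^((1:ℂ)/2)) := by
    apply seq_tendsto.frequently
    apply Filter.Eventually.frequently
    apply Filter.Eventually.of_forall
    intro n
    exact step1 (seq_pos n) hz
  have h1U : (1:ℂ) ∈ {a : ℂ | 0 < a.re ∧ 0 < (a^2).re} := by
    constructor <;> simp
  exact hf.eqOn_of_preconnected_of_frequently_eq hg omega_conn h1U hfreq ⟨ha, ha2⟩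

/-- The Laplace transform of
`ψ_a(t) = (a/(2√π t^(3/2))) exp(-a²/(4t))` is `exp(-a√z)` for `Re z > 0`,
whenever `Re a > 0` and `Re (a²) > 0`. -/
theorem laplace_transform_psi (a z : ℂ) (ha : 0 < a.re) (ha2 : 0 < (a ^ 2).re)
    (hz : 0 < z.re) :
    ∫ t in Set.Ioi (0 : ℝ),
        Complex.exp (-z * t) *
          (a / (2 * Real.sqrt π * (t : ℂ) ^ ((3 : ℂ) / 2)) *
            Complex.exp (-a ^ 2 / (4 * t))) =
      Complex.exp (-a * z ^ ((1 : ℂ) / 2)) := by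
  have heq : ∀ t ∈ Set.Ioi (0:ℝ),
      Complex.exp (-z * t) *
          (a / (2 * Real.sqrt π * (t : ℂ) ^ ((3 : ℂ) / 2)) *
            Complex.exp (-a ^ 2 / (4 * t))) = ker' a z t :=
    fun t ht => ker_eq_ker' a z ht
  rw [setIntegral_congr_fun measurableSet_Ioi heq]
  exact step2 ha ha2 hz
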